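/- Let N = (n_ij) ∈ SL(2,ℤ) and let p, q, r be integers with r ≠ 0. Then the map ℤ⁴ → G⁺_{N,p,q,r} sending (n₀,n₁,n₂,n₃) to g₀^{n₀} g₁^{n₁} g₂^{n₂} g₃^{n₃} is a bijection; i.e., every element of G⁺_{N,p,q,r} can be written uniquely as such a product. -/

import Mathlib

/-- The relations of the group `G⁺_{N,p,q,r}` attached to an Inoue surface of type `S⁺`:
generators `g₀,g₁,g₂,g₃` (indexed by `Fin 4`) and relations
`g₀g₁g₀⁻¹ = g₁^{n₁₁} g₂^{n₁₂} g₃^{p}`, `g₀g₂g₀⁻¹ = g₁^{n₂₁} g₂^{n₂₂} g₃^{q}`,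
`g₁g₂g₁⁻¹g₂⁻¹ = g₃^{r}` and `g₃gᵢ = gᵢg₃` for `i = 0,1,2`. -/
def gplusRels (N : Matrix (Fin 2) (Fin 2) ℤ) (p q r : ℤ) : Set (FreeGroup (Fin 4)) :=
  { FreeGroup.of 0 * FreeGroup.of 1 * (FreeGroup.of 0)⁻¹ *
      ((FreeGroup.of 1) ^ N 0 0 * (FreeGroup.of 2) ^ N 0 1 * (FreeGroup.of 3) ^ p)⁻¹,
    FreeGroup.of 0 * FreeGroup.of 2 * (FreeGroup.of 0)⁻¹ *
      ((FreeGroup.of 1) ^ N 1 0 * (FreeGroup.of 2) ^ N 1 1 * (FreeGroup.of 3) ^ q)⁻¹,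
    FreeGroup.of 1 * FreeGroup.of 2 * (FreeGroup.of 1)⁻¹ * (FreeGroup.of 2)⁻¹ *
      ((FreeGroup.of 3) ^ r)⁻¹,
    FreeGroup.of 3 * FreeGroup.of 0 * (FreeGroup.of 3)⁻¹ * (FreeGroup.of 0)⁻¹,
    FreeGroup.of 3 * FreeGroup.of 1 * (FreeGroup.of 3)⁻¹ * (FreeGroup.of 1)⁻¹,
    FreeGroup.of 3 * FreeGroup.of 2 * (FreeGroup.of 3)⁻¹ * (FreeGroup.of 2)⁻¹ }

/-- The group `G⁺_{N,p,q,r}`. -/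
abbrev Gplus (N : Matrix (Fin 2) (Fin 2) ℤ) (p q r : ℤ) := PresentedGroup (gplusRels N p q r)

namespace InoueAux

/-- Heisenberg-type group on `ℤ³` with commutator parameter `r`. -/
@[ext]
structure Heis (r : ℤ) where
  x : ℤ
  y : ℤ
  z : ℤ

namespace Heis

variable {r : ℤ}

instance : Mul (Heis r) := ⟨fun u v => ⟨u.x + v.x, u.y + v.y, u.z + v.z - r * v.x * u.y⟩⟩
instance : One (Heis r) := ⟨⟨0, 0, 0⟩⟩
instance : Inv (Heis r) := ⟨fun u => ⟨-u.x, -u.y, -u.z - r * u.x * u.y⟩⟩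

@[simp] lemma mul_x (u v : Heis r) : (u * v).x = u.x + v.x := rfl
@[simp] lemma mul_y (u v : Heis r) : (u * v).y = u.y + v.y := rfl
@[simp] lemma mul_z (u v : Heis r) : (u * v).z = u.z + v.z - r * v.x * u.y := rfl
@[simp] lemma one_x : (1 : Heis r).x = 0 := rfl
@[simp] lemma one_y : (1 : Heis r).y = 0 := rfl
@[simp] lemma one_z : (1 : Heis r).z = 0 := rfl
@[simp] lemma inv_x (u : Heis r) : u⁻¹.x = -u.x := rfl
@[simp] lemma inv_y (u : Heis r) : u⁻¹.y = -u.y := rfl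
@[simp] lemma inv_z (u : Heis r) : u⁻¹.z = -u.z - r * u.x * u.y := rfl

instance : Group (Heis r) where
  mul_assoc u v w := by ext <;> simp <;> ring
  one_mul u := by ext <;> simp
  mul_one u := by ext <;> simp
  inv_mul_cancel u := by ext <;> simp <;> ring

/-- The one-parameter subgroup through `⟨a,b,c⟩`, assuming `a*b = 0`. -/
def ray (a b c : ℤ) (h : a * b = 0) : Multiplicative ℤ →* Heis r where
  toFun t := ⟨t.toAdd * a, t.toAdd * b, t.toAdd * c⟩
  map_one' := by ext <;> simp
  map_mul' s t := by
    ext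
    · simp; ring
    · simp; ring
    · simp
      linear_combination (r * Multiplicative.toAdd s * Multiplicative.toAdd t) * h

lemma zpow_mk (a b c : ℤ) (h : a * b = 0) (n : ℤ) :
    (⟨a, b, c⟩ : Heis r) ^ n = ⟨n * a, n * b, n * c⟩ := by
  have h1 : (⟨a, b, c⟩ : Heis r) = ray a b c h (Multiplicative.ofAdd 1) := by
    ext <;> simp [ray]
  rw [h1, ← map_zpow]
  have : (Multiplicative.ofAdd (1 : ℤ)) ^ n = Multiplicative.ofAdd n := by
    rw [← ofAdd_zsmul]; norm_num
  rw [this]; rfl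

lemma decomp (u : Heis r) :
    u = (⟨1, 0, 0⟩ : Heis r) ^ u.x * (⟨0, 1, 0⟩ : Heis r) ^ u.y * (⟨0, 0, 1⟩ : Heis r) ^ u.z := by
  rw [zpow_mk _ _ _ (by ring), zpow_mk _ _ _ (by ring), zpow_mk _ _ _ (by ring)]
  ext <;> simp

lemma closure_eq_top :
    Subgroup.closure ({⟨1, 0, 0⟩, ⟨0, 1, 0⟩, ⟨0, 0, 1⟩} : Set (Heis r)) = ⊤ := by
  rw [eq_top_iff]
  intro u _
  rw [decomp u]
  exact Subgroup.mul_mem _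
    (Subgroup.mul_mem _
      (Subgroup.zpow_mem _ (Subgroup.subset_closure (by simp)) _)
      (Subgroup.zpow_mem _ (Subgroup.subset_closure (by simp)) _))
    (Subgroup.zpow_mem _ (Subgroup.subset_closure (by simp)) _)

end Heis

/-- Triangular number `a*(a-1)/2`. -/
def T (a : ℤ) : ℤ := a * (a - 1) / 2

lemma two_T (a : ℤ) : 2 * T a = a * (a - 1) := by
  have h : (2 : ℤ) ∣ a * (a - 1) := by
    rcases Int.even_or_odd a with ⟨k, hk⟩ | ⟨k, hk⟩
    · exact ⟨k * (a - 1), by rw [hk]; ring⟩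
    · exact ⟨a * k, by rw [hk]; ring⟩
  rw [T, Int.mul_ediv_cancel' h]

lemma T_add (a b : ℤ) : T (a + b) = T a + T b + a * b := by
  have h1 := two_T a
  have h2 := two_T b
  have key : 2 * T (a + b) = 2 * (T a + T b + a * b) := by
    linear_combination two_T (a + b) - h1 - h2
  omega

lemma T_one : T 1 = 0 := rfl
lemma T_zero : T 0 = 0 := rfl

section Phi

variable (N : Matrix (Fin 2) (Fin 2) ℤ) (p q r : ℤ)

/-- The forward map of the automorphism of `Heis r` implementing conjugation by `g₀`. -/
def phiFun (u : Heis r) : Heis r :=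
  ⟨u.x * N 0 0 + u.y * N 1 0, u.x * N 0 1 + u.y * N 1 1,
    u.z + u.x * p + u.y * q -
      r * (N 0 0 * N 0 1 * T u.x + N 1 0 * N 1 1 * T u.y + N 0 1 * N 1 0 * (u.x * u.y))⟩

def ib (u : Heis r) : ℤ := u.x * N 1 1 - u.y * N 1 0
def ic (u : Heis r) : ℤ := u.y * N 0 0 - u.x * N 0 1

/-- The inverse map. -/
def phiInv (u : Heis r) : Heis r :=
  ⟨ib N r u, ic N r u,
    u.z - ib N r u * p - ic N r u * q +
      r * (N 0 0 * N 0 1 * T (ib N r u) + N 1 0 * N 1 1 * T (ic N r u) +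
        N 0 1 * N 1 0 * (ib N r u * ic N r u))⟩

variable (hdet : N 0 0 * N 1 1 - N 0 1 * N 1 0 = 1)

include hdet

lemma ib_phiFun (u : Heis r) : ib N r (phiFun N p q r u) = u.x := by
  simp only [ib, phiFun]
  linear_combination u.x * hdet

lemma ic_phiFun (u : Heis r) : ic N r (phiFun N p q r u) = u.y := by
  simp only [ic, phiFun]
  linear_combination u.y * hdet

/-- The automorphism of `Heis r` implementing conjugation by `g₀`. -/
def phi : Heis r ≃* Heis r where
  toFun := phiFun N p q r
  invFun := phiInv N p q r
  left_inv u := by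
    ext
    · exact ib_phiFun N p q r hdet u
    · exact ic_phiFun N p q r hdet u
    · show (phiInv N p q r (phiFun N p q r u)).z = u.z
      simp only [phiInv]
      rw [ib_phiFun N p q r hdet u, ic_phiFun N p q r hdet u]
      simp only [phiFun]
      ring
  right_inv u := by
    have hb : (phiFun N p q r (phiInv N p q r u)).x = u.x := by
      simp only [phiFun, phiInv, ib, ic]
      linear_combination u.x * hdet
    have hc : (phiFun N p q r (phiInv N p q r u)).y = u.y := by
      simp only [phiFun, phiInv, ib, ic]
      linear_combination u.y * hdet
    ext
    · exact hb
    · exact hc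
    · show (phiFun N p q r (phiInv N p q r u)).z = u.z
      simp only [phiFun, phiInv]
      ring
  map_mul' u v := by
    ext
    · simp only [phiFun, Heis.mul_x, Heis.mul_y]; ring
    · simp only [phiFun, Heis.mul_x, Heis.mul_y]; ring
    · simp only [phiFun, Heis.mul_x, Heis.mul_y, Heis.mul_z, T_add]
      linear_combination (r * v.x * u.y) * hdet

@[simp] lemma phi_e1 : phi N p q r hdet ⟨1, 0, 0⟩ = ⟨N 0 0, N 0 1, p⟩ := by
  ext <;> simp [phi, phiFun, T_one, T_zero]

@[simp] lemma phi_e2 : phi N p q r hdet ⟨0, 1, 0⟩ = ⟨N 1 0, N 1 1, q⟩ := by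
  ext <;> simp [phi, phiFun, T_one, T_zero]

@[simp] lemma phi_e3 : phi N p q r hdet ⟨0, 0, 1⟩ = ⟨0, 0, 1⟩ := by
  ext <;> simp [phi, phiFun, T_zero]

end Phi

section CommuteAux

variable {G : Type*} [Group G]

lemma conj_zpow_aux {b c u : G} {t : ℤ} (hcb : Commute c b)
    (h : b * u * b⁻¹ = c ^ t * u) :
    ∀ n : ℤ, b ^ n * u * (b ^ n)⁻¹ = c ^ (t * n) * u := by
  have hinv : b⁻¹ * u * (b⁻¹)⁻¹ = c ^ (-t) * u := by
    rw [inv_inv]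
    have hb_c : b * c ^ (-t) * b⁻¹ = c ^ (-t) := by
      rw [((hcb.zpow_left (-t)).symm).eq, mul_assoc, mul_inv_cancel, mul_one]
    have key : b * (c ^ (-t) * u) * b⁻¹ = u := by
      calc b * (c ^ (-t) * u) * b⁻¹
          = (b * c ^ (-t) * b⁻¹) * (b * u * b⁻¹) := by group
        _ = c ^ (-t) * (c ^ t * u) := by rw [hb_c, h]
        _ = u := by rw [← mul_assoc, ← zpow_add]; simp
    have hX : b * (c ^ (-t) * u) = u * b := mul_inv_eq_iff_eq_mul.mp key
    have : c ^ (-t) * u = b⁻¹ * (u * b) := eq_inv_mul_iff_mul_eq.mpr hX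
    rw [mul_assoc]
    exact this.symm
  intro n
  induction n using Int.induction_on with
  | zero => simp
  | succ n ih =>
      have hb : b ^ ((n : ℤ) + 1) = b ^ (n : ℤ) * b := zpow_add_one b n
      calc b ^ ((n : ℤ) + 1) * u * (b ^ ((n : ℤ) + 1))⁻¹
          = b ^ (n : ℤ) * (b * u * b⁻¹) * (b ^ (n : ℤ))⁻¹ := by rw [hb]; group
        _ = b ^ (n : ℤ) * (c ^ t * u) * (b ^ (n : ℤ))⁻¹ := by rw [h]
        _ = c ^ t * (b ^ (n : ℤ) * u * (b ^ (n : ℤ))⁻¹) := by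
            rw [← mul_assoc, ← mul_assoc, (hcb.zpow_zpow t n).symm.eq, mul_assoc, mul_assoc]; group
        _ = c ^ t * (c ^ (t * n) * u) := by rw [ih]
        _ = c ^ (t * ((n : ℤ) + 1)) * u := by rw [← mul_assoc, ← zpow_add]; ring_nf
  | pred n ih =>
      have hb : b ^ (-(n : ℤ) - 1) = b ^ (-(n : ℤ)) * b⁻¹ := by
        rw [zpow_sub_one]
      calc b ^ (-(n : ℤ) - 1) * u * (b ^ (-(n : ℤ) - 1))⁻¹
          = b ^ (-(n : ℤ)) * (b⁻¹ * u * (b⁻¹)⁻¹) * (b ^ (-(n : ℤ)))⁻¹ := by rw [hb]; group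
        _ = b ^ (-(n : ℤ)) * (c ^ (-t) * u) * (b ^ (-(n : ℤ)))⁻¹ := by rw [hinv]
        _ = c ^ (-t) * (b ^ (-(n : ℤ)) * u * (b ^ (-(n : ℤ)))⁻¹) := by
            rw [← mul_assoc, ← mul_assoc, (hcb.zpow_zpow (-t) (-n)).symm.eq, mul_assoc, mul_assoc]; group
        _ = c ^ (-t) * (c ^ (t * (-(n : ℤ))) * u) := by rw [ih]
        _ = c ^ (t * (-(n : ℤ) - 1)) * u := by rw [← mul_assoc, ← zpow_add]; ring_nf

/-- The master commutation lemma: if `b⁻¹ab` differs from `a` by a central-ish `c^t`,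
then `b^n * a^m = c^(t*m*n) * (a^m * b^n)`. -/
lemma zpow_mul_zpow {a b c : G} {t : ℤ} (hca : Commute c a) (hcb : Commute c b)
    (h : b * a * b⁻¹ = c ^ t * a) (m n : ℤ) :
    b ^ n * a ^ m = c ^ (t * m * n) * (a ^ m * b ^ n) := by
  have h1 : b * a ^ m * b⁻¹ = c ^ (t * m) * a ^ m := by
    calc b * a ^ m * b⁻¹ = (b * a * b⁻¹) ^ m := by rw [conj_zpow]
      _ = (c ^ t * a) ^ m := by rw [h]
      _ = (c ^ t) ^ m * a ^ m := (hca.zpow_left t).mul_zpow m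
      _ = c ^ (t * m) * a ^ m := by rw [← zpow_mul]
  have h2 := conj_zpow_aux hcb h1 n
  calc b ^ n * a ^ m = (b ^ n * a ^ m * (b ^ n)⁻¹) * b ^ n := by group
    _ = (c ^ (t * m * n) * a ^ m) * b ^ n := by rw [h2]
    _ = c ^ (t * m * n) * (a ^ m * b ^ n) := by group

lemma prod_form {A B C : G} {s : ℤ} (hCA : Commute C A) (hCB : Commute C B)
    (key : ∀ m n : ℤ, B ^ n * A ^ m = C ^ (s * m * n) * (A ^ m * B ^ n))
    (x1 y1 z1 x2 y2 z2 : ℤ) :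
    (A ^ x1 * B ^ y1 * C ^ z1) * (A ^ x2 * B ^ y2 * C ^ z2) =
      A ^ (x1 + x2) * B ^ (y1 + y2) * C ^ (z1 + z2 + s * x2 * y1) := by
  have c1 : C ^ z1 * A ^ x2 = A ^ x2 * C ^ z1 := (hCA.zpow_zpow z1 x2).eq
  have c2 : ∀ z y : ℤ, C ^ z * B ^ y = B ^ y * C ^ z := fun z y => (hCB.zpow_zpow z y).eq
  have c3 : ∀ z x : ℤ, C ^ z * A ^ x = A ^ x * C ^ z := fun z x => (hCA.zpow_zpow z x).eq
  calc (A ^ x1 * B ^ y1 * C ^ z1) * (A ^ x2 * B ^ y2 * C ^ z2)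
      = A ^ x1 * (B ^ y1 * (C ^ z1 * A ^ x2) * B ^ y2) * C ^ z2 := by group
    _ = A ^ x1 * (B ^ y1 * (A ^ x2 * C ^ z1) * B ^ y2) * C ^ z2 := by rw [c1]
    _ = A ^ x1 * ((B ^ y1 * A ^ x2) * (C ^ z1 * B ^ y2)) * C ^ z2 := by group
    _ = A ^ x1 * ((C ^ (s * x2 * y1) * (A ^ x2 * B ^ y1)) * (B ^ y2 * C ^ z1)) * C ^ z2 := by
        rw [key, c2]
    _ = A ^ x1 * ((C ^ (s * x2 * y1) * A ^ x2) * B ^ y1 * B ^ y2 * C ^ z1) * C ^ z2 := by group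
    _ = A ^ x1 * ((A ^ x2 * C ^ (s * x2 * y1)) * B ^ y1 * B ^ y2 * C ^ z1) * C ^ z2 := by
        rw [c3 (s * x2 * y1) x2]
    _ = A ^ x1 * (A ^ x2 * ((C ^ (s * x2 * y1) * B ^ y1) * B ^ y2 * C ^ z1)) * C ^ z2 := by group
    _ = A ^ x1 * (A ^ x2 * ((B ^ y1 * C ^ (s * x2 * y1)) * B ^ y2 * C ^ z1)) * C ^ z2 := by
        rw [c2 (s * x2 * y1) y1]
    _ = A ^ x1 * (A ^ x2 * (B ^ y1 * (C ^ (s * x2 * y1) * B ^ y2) * C ^ z1)) * C ^ z2 := by group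
    _ = A ^ x1 * (A ^ x2 * (B ^ y1 * (B ^ y2 * C ^ (s * x2 * y1)) * C ^ z1)) * C ^ z2 := by
        rw [c2 (s * x2 * y1) y2]
    _ = (A ^ x1 * A ^ x2) * (B ^ y1 * B ^ y2) * (C ^ (s * x2 * y1) * C ^ z1 * C ^ z2) := by group
    _ = A ^ (x1 + x2) * B ^ (y1 + y2) * C ^ (z1 + z2 + s * x2 * y1) := by
        rw [← zpow_add, ← zpow_add, ← zpow_add, ← zpow_add]
        congr 1
        ring

end CommuteAux

section Main

open SemidirectProduct Multiplicative

variable (N : Matrix (Fin 2) (Fin 2) ℤ) (p q r : ℤ)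

lemma mk_rel {w : FreeGroup (Fin 4)} (hw : w ∈ gplusRels N p q r) :
    PresentedGroup.mk (gplusRels N p q r) w = 1 :=
  (QuotientGroup.eq_one_iff _).2 (Subgroup.subset_normalClosure hw)

lemma grel1 : (PresentedGroup.of 0 : Gplus N p q r) * PresentedGroup.of 1 *
    (PresentedGroup.of 0)⁻¹ =
    PresentedGroup.of 1 ^ N 0 0 * PresentedGroup.of 2 ^ N 0 1 * PresentedGroup.of 3 ^ p := by
  have h := mk_rel N p q r (w := FreeGroup.of 0 * FreeGroup.of 1 * (FreeGroup.of 0)⁻¹ *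
      ((FreeGroup.of 1) ^ N 0 0 * (FreeGroup.of 2) ^ N 0 1 * (FreeGroup.of 3) ^ p)⁻¹)
      (by simp only [gplusRels, Set.mem_insert_iff, Set.mem_singleton_iff]; tauto)
  simp only [map_mul, map_inv, map_zpow] at h
  exact mul_inv_eq_one.mp h

lemma grel2 : (PresentedGroup.of 0 : Gplus N p q r) * PresentedGroup.of 2 *
    (PresentedGroup.of 0)⁻¹ =
    PresentedGroup.of 1 ^ N 1 0 * PresentedGroup.of 2 ^ N 1 1 * PresentedGroup.of 3 ^ q := by
  have h := mk_rel N p q r (w := FreeGroup.of 0 * FreeGroup.of 2 * (FreeGroup.of 0)⁻¹ *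
      ((FreeGroup.of 1) ^ N 1 0 * (FreeGroup.of 2) ^ N 1 1 * (FreeGroup.of 3) ^ q)⁻¹)
      (by simp only [gplusRels, Set.mem_insert_iff, Set.mem_singleton_iff]; tauto)
  simp only [map_mul, map_inv, map_zpow] at h
  exact mul_inv_eq_one.mp h

lemma grel3 : (PresentedGroup.of 1 : Gplus N p q r) * PresentedGroup.of 2 *
    (PresentedGroup.of 1)⁻¹ * (PresentedGroup.of 2)⁻¹ = PresentedGroup.of 3 ^ r := by
  have h := mk_rel N p q r (w := FreeGroup.of 1 * FreeGroup.of 2 * (FreeGroup.of 1)⁻¹ *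
      (FreeGroup.of 2)⁻¹ * ((FreeGroup.of 3) ^ r)⁻¹)
      (by simp only [gplusRels, Set.mem_insert_iff, Set.mem_singleton_iff]; tauto)
  simp only [map_mul, map_inv, map_zpow] at h
  exact mul_inv_eq_one.mp h

lemma gcomm0 : Commute (PresentedGroup.of 3 : Gplus N p q r) (PresentedGroup.of 0) := by
  have h := mk_rel N p q r (w := FreeGroup.of 3 * FreeGroup.of 0 *
      (FreeGroup.of 3)⁻¹ * (FreeGroup.of 0)⁻¹)
      (by simp only [gplusRels, Set.mem_insert_iff, Set.mem_singleton_iff]; tauto)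
  simp only [map_mul, map_inv] at h
  exact commutatorElement_eq_one_iff_commute.mp h

lemma gcomm1 : Commute (PresentedGroup.of 3 : Gplus N p q r) (PresentedGroup.of 1) := by
  have h := mk_rel N p q r (w := FreeGroup.of 3 * FreeGroup.of 1 *
      (FreeGroup.of 3)⁻¹ * (FreeGroup.of 1)⁻¹)
      (by simp only [gplusRels, Set.mem_insert_iff, Set.mem_singleton_iff]; tauto)
  simp only [map_mul, map_inv] at h
  exact commutatorElement_eq_one_iff_commute.mp h

lemma gcomm2 : Commute (PresentedGroup.of 3 : Gplus N p q r) (PresentedGroup.of 2) := by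
  have h := mk_rel N p q r (w := FreeGroup.of 3 * FreeGroup.of 2 *
      (FreeGroup.of 3)⁻¹ * (FreeGroup.of 2)⁻¹)
      (by simp only [gplusRels, Set.mem_insert_iff, Set.mem_singleton_iff]; tauto)
  simp only [map_mul, map_inv] at h
  exact commutatorElement_eq_one_iff_commute.mp h

lemma grel3' : (PresentedGroup.of 2 : Gplus N p q r) * PresentedGroup.of 1 *
    (PresentedGroup.of 2)⁻¹ = PresentedGroup.of 3 ^ (-r) * PresentedGroup.of 1 := by
  have h3 := grel3 N p q r
  have h4 : (PresentedGroup.of 2 : Gplus N p q r) * PresentedGroup.of 1 *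
      (PresentedGroup.of 2)⁻¹ * (PresentedGroup.of 1)⁻¹ =
      ((PresentedGroup.of 1 : Gplus N p q r) * PresentedGroup.of 2 *
        (PresentedGroup.of 1)⁻¹ * (PresentedGroup.of 2)⁻¹)⁻¹ := by group
  rw [h3] at h4
  calc (PresentedGroup.of 2 : Gplus N p q r) * PresentedGroup.of 1 * (PresentedGroup.of 2)⁻¹
      = ((PresentedGroup.of 2 : Gplus N p q r) * PresentedGroup.of 1 *
          (PresentedGroup.of 2)⁻¹ * (PresentedGroup.of 1)⁻¹) * PresentedGroup.of 1 := by group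
    _ = (PresentedGroup.of 3 ^ r)⁻¹ * PresentedGroup.of 1 := by rw [h4]
    _ = PresentedGroup.of 3 ^ (-r) * PresentedGroup.of 1 := by rw [zpow_neg]

lemma gkey (m n : ℤ) : (PresentedGroup.of 2 : Gplus N p q r) ^ n * PresentedGroup.of 1 ^ m =
    PresentedGroup.of 3 ^ (-r * m * n) * (PresentedGroup.of 1 ^ m * PresentedGroup.of 2 ^ n) :=
  zpow_mul_zpow (gcomm1 N p q r) (gcomm2 N p q r) (grel3' N p q r) m n

/-- The normal-form homomorphism from the Heisenberg group to `Gplus`. -/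
def psiH : Heis r →* Gplus N p q r where
  toFun u := PresentedGroup.of 1 ^ u.x * PresentedGroup.of 2 ^ u.y * PresentedGroup.of 3 ^ u.z
  map_one' := by simp
  map_mul' u v := by
    simp only [Heis.mul_x, Heis.mul_y, Heis.mul_z]
    have h := prod_form (gcomm1 N p q r) (gcomm2 N p q r) (gkey N p q r)
      u.x u.y u.z v.x v.y v.z
    rw [show u.z + v.z - r * v.x * u.y = u.z + v.z + -r * v.x * u.y by ring]
    exact h.symm

@[simp] lemma psiH_apply (u : Heis r) : psiH N p q r u =
    PresentedGroup.of 1 ^ u.x * PresentedGroup.of 2 ^ u.y * PresentedGroup.of 3 ^ u.z := rfl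

end Main

section Main2

open SemidirectProduct Multiplicative

variable (N : Matrix (Fin 2) (Fin 2) ℤ) (p q r : ℤ)
  (hdet : N 0 0 * N 1 1 - N 0 1 * N 1 0 = 1)

/-- The concrete model: semidirect product of the Heisenberg group with `ℤ`. -/
abbrev GG := Heis r ⋊[zpowersHom (MulAut (Heis r)) (phi N p q r hdet)] Multiplicative ℤ

/-- Images of the four generators in the concrete model. -/
def fgen : Fin 4 → GG N p q r hdet := fun i =>
  match i with
  | 0 => inr (ofAdd 1)
  | 1 => inl ⟨1, 0, 0⟩
  | 2 => inl ⟨0, 1, 0⟩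
  | 3 => inl ⟨0, 0, 1⟩

@[simp] lemma fgen0 : fgen N p q r hdet 0 = inr (ofAdd 1) := rfl
@[simp] lemma fgen1 : fgen N p q r hdet 1 = inl ⟨1, 0, 0⟩ := rfl
@[simp] lemma fgen2 : fgen N p q r hdet 2 = inl ⟨0, 1, 0⟩ := rfl
@[simp] lemma fgen3 : fgen N p q r hdet 3 = inl ⟨0, 0, 1⟩ := rfl

lemma zph_ofAdd_one :
    zpowersHom (MulAut (Heis r)) (phi N p q r hdet) (ofAdd 1) = phi N p q r hdet := by
  rw [zpowersHom_apply, toAdd_ofAdd, zpow_one]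

lemma conj_inr (h : Heis r) :
    (inr (ofAdd 1) : GG N p q r hdet) * inl h * (inr (ofAdd 1))⁻¹ =
      inl (phi N p q r hdet h) := by
  calc (inr (ofAdd 1) : GG N p q r hdet) * inl h * (inr (ofAdd 1))⁻¹
      = inr (ofAdd 1) * inl h * inr (ofAdd 1)⁻¹ := by rw [map_inv]
    _ = inl (zpowersHom (MulAut (Heis r)) (phi N p q r hdet) (ofAdd 1) h) :=
        (inl_aut _ _).symm
    _ = inl (phi N p q r hdet h) := by rw [zph_ofAdd_one]

lemma fgen_rels : ∀ w ∈ gplusRels N p q r, FreeGroup.lift (fgen N p q r hdet) w = 1 := by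
  intro w hw
  simp only [gplusRels, Set.mem_insert_iff, Set.mem_singleton_iff] at hw
  rcases hw with rfl | rfl | rfl | rfl | rfl | rfl
  · simp only [map_mul, map_inv, map_zpow, FreeGroup.lift_apply_of, fgen0, fgen1, fgen2, fgen3]
    apply mul_inv_eq_one.mpr
    rw [conj_inr, ← map_zpow, ← map_zpow, ← map_zpow, ← map_mul, ← map_mul]
    apply congrArg
    rw [phi_e1, Heis.zpow_mk 1 0 0 (by ring), Heis.zpow_mk 0 1 0 (by ring),
      Heis.zpow_mk 0 0 1 (by ring)]
    ext <;> simp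
  · simp only [map_mul, map_inv, map_zpow, FreeGroup.lift_apply_of, fgen0, fgen1, fgen2, fgen3]
    apply mul_inv_eq_one.mpr
    rw [conj_inr, ← map_zpow, ← map_zpow, ← map_zpow, ← map_mul, ← map_mul]
    apply congrArg
    rw [phi_e2, Heis.zpow_mk 1 0 0 (by ring), Heis.zpow_mk 0 1 0 (by ring),
      Heis.zpow_mk 0 0 1 (by ring)]
    ext <;> simp
  · simp only [map_mul, map_inv, map_zpow, FreeGroup.lift_apply_of, fgen0, fgen1, fgen2, fgen3]
    rw [← map_zpow, ← map_inv, ← map_inv, ← map_inv, ← map_mul, ← map_mul, ← map_mul, ← map_mul]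
    have hH : ((⟨1, 0, 0⟩ : Heis r) * ⟨0, 1, 0⟩ * (⟨1, 0, 0⟩ : Heis r)⁻¹ *
        (⟨0, 1, 0⟩ : Heis r)⁻¹ * ((⟨0, 0, 1⟩ : Heis r) ^ r)⁻¹) = 1 := by
      rw [Heis.zpow_mk 0 0 1 (by ring)]
      ext <;> simp
    rw [hH, map_one]
  · simp only [map_mul, map_inv, FreeGroup.lift_apply_of, fgen0, fgen3]
    have hconj : (inr (ofAdd 1) : GG N p q r hdet) * inl ⟨0, 0, 1⟩ * (inr (ofAdd 1))⁻¹ =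
        inl ⟨0, 0, 1⟩ := by rw [conj_inr, phi_e3]
    have hcomm : Commute (inl (⟨0, 0, 1⟩ : Heis r) : GG N p q r hdet) (inr (ofAdd 1)) :=
      (mul_inv_eq_iff_eq_mul.mp hconj).symm
    exact commutatorElement_eq_one_iff_commute.mpr hcomm
  · simp only [map_mul, map_inv, FreeGroup.lift_apply_of, fgen1, fgen3]
    rw [← map_inv, ← map_inv, ← map_mul, ← map_mul, ← map_mul]
    have hH : ((⟨0, 0, 1⟩ : Heis r) * ⟨1, 0, 0⟩ * (⟨0, 0, 1⟩ : Heis r)⁻¹ *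
        (⟨1, 0, 0⟩ : Heis r)⁻¹) = 1 := by ext <;> simp
    rw [hH, map_one]
  · simp only [map_mul, map_inv, FreeGroup.lift_apply_of, fgen2, fgen3]
    rw [← map_inv, ← map_inv, ← map_mul, ← map_mul, ← map_mul]
    have hH : ((⟨0, 0, 1⟩ : Heis r) * ⟨0, 1, 0⟩ * (⟨0, 0, 1⟩ : Heis r)⁻¹ *
        (⟨0, 1, 0⟩ : Heis r)⁻¹) = 1 := by ext <;> simp
    rw [hH, map_one]

/-- The homomorphism from `Gplus` to the concrete model. -/
def Phi : Gplus N p q r →* GG N p q r hdet :=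
  PresentedGroup.toGroup (fgen_rels N p q r hdet)

@[simp] lemma Phi_of (i : Fin 4) :
    Phi N p q r hdet (PresentedGroup.of i) = fgen N p q r hdet i :=
  PresentedGroup.toGroup.of _

lemma step1 (u : Heis r) : psiH N p q r (phi N p q r hdet u) =
    PresentedGroup.of 0 * psiH N p q r u * (PresentedGroup.of 0)⁻¹ := by
  have key : (psiH N p q r).comp (phi N p q r hdet).toMonoidHom =
      (MulAut.conj (PresentedGroup.of 0 : Gplus N p q r)).toMonoidHom.comp (psiH N p q r) := by
    apply MonoidHom.eq_of_eqOn_dense Heis.closure_eq_top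
    intro x hx
    simp only [Set.mem_insert_iff, Set.mem_singleton_iff] at hx
    rcases hx with rfl | rfl | rfl
    · show psiH N p q r (phi N p q r hdet ⟨1, 0, 0⟩) =
        MulAut.conj (PresentedGroup.of 0) (psiH N p q r ⟨1, 0, 0⟩)
      rw [phi_e1, MulAut.conj_apply, psiH_apply, psiH_apply]
      simp only [zpow_one, zpow_zero, mul_one]
      exact (grel1 N p q r).symm
    · show psiH N p q r (phi N p q r hdet ⟨0, 1, 0⟩) =
        MulAut.conj (PresentedGroup.of 0) (psiH N p q r ⟨0, 1, 0⟩)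
      rw [phi_e2, MulAut.conj_apply, psiH_apply, psiH_apply]
      simp only [zpow_one, zpow_zero, mul_one, one_mul]
      exact (grel2 N p q r).symm
    · show psiH N p q r (phi N p q r hdet ⟨0, 0, 1⟩) =
        MulAut.conj (PresentedGroup.of 0) (psiH N p q r ⟨0, 0, 1⟩)
      rw [phi_e3, MulAut.conj_apply, psiH_apply]
      simp only [zpow_one, zpow_zero, mul_one, one_mul]
      rw [← (gcomm0 N p q r).eq, mul_inv_cancel_right]
  have := DFunLike.congr_fun key u
  simpa [MulAut.conj_apply] using this

lemma stepinv (u : Heis r) : psiH N p q r ((phi N p q r hdet)⁻¹ u) =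
    (PresentedGroup.of 0)⁻¹ * psiH N p q r u * PresentedGroup.of 0 := by
  have h1 := step1 N p q r hdet ((phi N p q r hdet)⁻¹ u)
  rw [MulAut.apply_inv_self] at h1
  rw [h1]; group

lemma stepm : ∀ (m : ℤ) (u : Heis r), psiH N p q r ((phi N p q r hdet ^ m) u) =
    PresentedGroup.of 0 ^ m * psiH N p q r u * (PresentedGroup.of 0 ^ m)⁻¹ := by
  intro m
  induction m using Int.induction_on with
  | zero => intro u; simp [MulAut.one_apply]
  | succ n ih =>
      intro u
      rw [zpow_add_one (phi N p q r hdet) n, MulAut.mul_apply, ih, step1]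
      rw [zpow_add_one (PresentedGroup.of 0 : Gplus N p q r) n]
      group
  | pred n ih =>
      intro u
      rw [zpow_sub_one (phi N p q r hdet) (-n), MulAut.mul_apply, ih, stepinv]
      rw [zpow_sub_one (PresentedGroup.of 0 : Gplus N p q r) (-n)]
      group

lemma hcompat : ∀ t : Multiplicative ℤ,
    (psiH N p q r).comp ((zpowersHom (MulAut (Heis r)) (phi N p q r hdet) t)).toMonoidHom =
      (MulAut.conj (zpowersHom (Gplus N p q r) (PresentedGroup.of 0) t)).toMonoidHom.comp
        (psiH N p q r) := by
  intro t
  ext u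
  simp only [MonoidHom.comp_apply, MulEquiv.coe_toMonoidHom, MulAut.conj_apply,
    zpowersHom_apply]
  exact stepm N p q r hdet t.toAdd u

/-- The homomorphism from the concrete model to `Gplus`. -/
def Psi : GG N p q r hdet →* Gplus N p q r :=
  SemidirectProduct.lift (psiH N p q r) (zpowersHom (Gplus N p q r) (PresentedGroup.of 0))
    (hcompat N p q r hdet)

@[simp] lemma Psi_inl (h : Heis r) : Psi N p q r hdet (inl h) = psiH N p q r h := by
  unfold Psi; exact lift_inl _ _ _ _

@[simp] lemma Psi_inr (t : Multiplicative ℤ) :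
    Psi N p q r hdet (inr t) = PresentedGroup.of 0 ^ t.toAdd := by
  unfold Psi; rw [lift_inr, zpowersHom_apply]

lemma Phi_psiH (h : Heis r) :
    Phi N p q r hdet (psiH N p q r h) = inl h := by
  rw [psiH_apply, map_mul, map_mul, map_zpow, map_zpow, map_zpow,
    Phi_of, Phi_of, Phi_of, fgen1, fgen2, fgen3,
    ← map_zpow inl, ← map_zpow inl, ← map_zpow inl, ← map_mul, ← map_mul, ← Heis.decomp]

lemma PhiPsi (x : GG N p q r hdet) : Phi N p q r hdet (Psi N p q r hdet x) = x := by
  rcases x with ⟨h, t⟩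
  have hx : (⟨h, t⟩ : GG N p q r hdet) = inl h * inr t := (inl_left_mul_inr_right _).symm
  rw [hx, map_mul, map_mul, Psi_inl, Psi_inr, Phi_psiH, map_zpow,
    Phi_of, fgen0, ← map_zpow inr]
  congr 1
  rw [← ofAdd_zsmul]
  simp

end Main2

end InoueAux

open InoueAux SemidirectProduct Multiplicative in
/-- Every element of `G⁺_{N,p,q,r}` can be written uniquely as
`g₀^{n₀} g₁^{n₁} g₂^{n₂} g₃^{n₃}` with `n₀,n₁,n₂,n₃ ∈ ℤ`. -/
theorem stmt_0 (N : Matrix (Fin 2) (Fin 2) ℤ) (hN : N.det = 1) (p q r : ℤ) (hr : r ≠ 0) :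
    Function.Bijective (fun n : Fin 4 → ℤ =>
      (PresentedGroup.of 0 : Gplus N p q r) ^ n 0 * PresentedGroup.of 1 ^ n 1 *
        PresentedGroup.of 2 ^ n 2 * PresentedGroup.of 3 ^ n 3) := by
  have hdet : N 0 0 * N 1 1 - N 0 1 * N 1 0 = 1 := by rwa [Matrix.det_fin_two] at hN
  have key : ∀ k : Fin 4 → ℤ,
      Phi N p q r hdet ((PresentedGroup.of 0 : Gplus N p q r) ^ k 0 *
          PresentedGroup.of 1 ^ k 1 * PresentedGroup.of 2 ^ k 2 * PresentedGroup.of 3 ^ k 3) =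
        inr (ofAdd (k 0)) * inl ⟨k 1, k 2, k 3⟩ := by
    intro k
    rw [map_mul, map_mul, map_mul, map_zpow, map_zpow, map_zpow, map_zpow,
      Phi_of, Phi_of, Phi_of, Phi_of, fgen0, fgen1, fgen2, fgen3,
      ← map_zpow inr, ← map_zpow inl, ← map_zpow inl, ← map_zpow inl]
    rw [show (ofAdd (1 : ℤ)) ^ k 0 = ofAdd (k 0) by rw [← ofAdd_zsmul]; norm_num]
    rw [mul_assoc (inr (ofAdd (k 0)) * inl ((⟨1,0,0⟩ : Heis r) ^ k 1)),
      mul_assoc (inr (ofAdd (k 0))), ← map_mul inl, ← map_mul inl]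
    congr 1
    rw [Heis.zpow_mk 1 0 0 (by ring), Heis.zpow_mk 0 1 0 (by ring),
      Heis.zpow_mk 0 0 1 (by ring)]
    ext <;> simp
  constructor
  · intro n m hnm
    have h3 : (inr (ofAdd (n 0)) * inl ⟨n 1, n 2, n 3⟩ : GG N p q r hdet) =
        inr (ofAdd (m 0)) * inl ⟨m 1, m 2, m 3⟩ := by
      rw [← key n, ← key m]
      exact congrArg _ hnm
    have hcompL : ∀ k : Fin 4 → ℤ,
        ((inr (ofAdd (k 0)) * inl ⟨k 1, k 2, k 3⟩ : GG N p q r hdet)) =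
          ⟨(phi N p q r hdet ^ k 0) ⟨k 1, k 2, k 3⟩, ofAdd (k 0)⟩ := by
      intro k
      refine SemidirectProduct.ext ?_ ?_
      · show (1 : Heis r) * _ = _
        rw [one_mul, zpowersHom_apply]
        simp only [right_inr, toAdd_ofAdd, left_inl]
      · show ofAdd (k 0) * 1 = ofAdd (k 0)
        rw [mul_one]
    rw [hcompL n, hcompL m] at h3
    have h0 : n 0 = m 0 := by
      have := congrArg SemidirectProduct.right h3
      simpa using this
    have hl : (phi N p q r hdet ^ n 0) ⟨n 1, n 2, n 3⟩ =
        (phi N p q r hdet ^ n 0) ⟨m 1, m 2, m 3⟩ := by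
      have := congrArg SemidirectProduct.left h3
      simpa [h0] using this
    have h123 : (⟨n 1, n 2, n 3⟩ : Heis r) = ⟨m 1, m 2, m 3⟩ :=
      EquivLike.injective (phi N p q r hdet ^ n 0) hl
    funext i
    fin_cases i
    · exact h0
    · exact congrArg Heis.x h123
    · exact congrArg Heis.y h123
    · exact congrArg Heis.z h123
  · intro γ
    have hmem : γ ∈ (Psi N p q r hdet).range := by
      have htop := PresentedGroup.closure_range_of (gplusRels N p q r)
      have hle : Subgroup.closure (Set.range (PresentedGroup.of : Fin 4 → Gplus N p q r)) ≤
          (Psi N p q r hdet).range := by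
        rw [Subgroup.closure_le]
        rintro x ⟨i, rfl⟩
        fin_cases i
        · exact ⟨inr (ofAdd 1), by simp⟩
        · exact ⟨inl ⟨1, 0, 0⟩, by simp⟩
        · exact ⟨inl ⟨0, 1, 0⟩, by simp⟩
        · exact ⟨inl ⟨0, 0, 1⟩, by simp⟩
      exact hle (htop ▸ Subgroup.mem_top γ)
    obtain ⟨x, rfl⟩ := hmem
    rcases x with ⟨h, t⟩
    refine ⟨![t.toAdd, ((phi N p q r hdet ^ t.toAdd)⁻¹ h).x,
      ((phi N p q r hdet ^ t.toAdd)⁻¹ h).y, ((phi N p q r hdet ^ t.toAdd)⁻¹ h).z], ?_⟩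
    show (PresentedGroup.of 0 : Gplus N p q r) ^ t.toAdd *
        PresentedGroup.of 1 ^ ((phi N p q r hdet ^ t.toAdd)⁻¹ h).x *
        PresentedGroup.of 2 ^ ((phi N p q r hdet ^ t.toAdd)⁻¹ h).y *
        PresentedGroup.of 3 ^ ((phi N p q r hdet ^ t.toAdd)⁻¹ h).z = Psi N p q r hdet ⟨h, t⟩
    have hdec : (⟨h, t⟩ : GG N p q r hdet) = inr t * inl ((phi N p q r hdet ^ t.toAdd)⁻¹ h) := by
      refine SemidirectProduct.ext ?_ ?_
      · show h = (1 : Heis r) * _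
        rw [one_mul, zpowersHom_apply]
        simp only [right_inr, left_inl, MulAut.apply_inv_self]
      · show t = t * 1
        rw [mul_one]
    rw [hdec, map_mul, Psi_inl, Psi_inr, psiH_apply]
    group
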